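/- Let p > 2 and let φ, B be as defined above. Then for all x,z > 0 with s = x^{1-p}z: B_{xz}(x,z) = (p-2)/(φ(s)-p+3), B_{xx}(x,z) = (p-1)² x^{-p} z² φ'(s)/(φ(s)-p+2)², B_{zz}(x,z) = x^{2-p} φ'(s), and B_{xx}(x,z)·B_{zz}(x,z) = (B_{xz}(x,z) + 1)². -/

import Mathlib

noncomputable def B2 (p : ℝ) (φ : ℝ → ℝ) (x z : ℝ) : ℝ :=
  (1 - 1 / p) * (x * z) *
    (φ (x ^ (1 - p) * z) + 1 / (φ (x ^ (1 - p) * z) - p + 2))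

lemma hBx_aux {p : ℝ} {φ : ℝ → ℝ} (hp : 2 < p) (hφdom : ∀ s, 0 < s → p - 2 < φ s)
    (hφ' : ∀ s, 0 < s →
      HasDerivAt φ ((1 + φ s) * (φ s - p + 2) / ((p - 1) * s * (φ s - p + 3))) s)
    {x z : ℝ} (hx : 0 < x) (hz : 0 < z) :
    HasDerivAt (fun x' => B2 p φ x' z)
      ((p - 1) * z / (φ (x ^ (1 - p) * z) - p + 2)) x := by
  have hs : 0 < x ^ (1 - p) * z := mul_pos (Real.rpow_pos_of_pos hx _) hz
  have hu := hφdom _ hs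
  have hq : (0:ℝ) < φ (x ^ (1 - p) * z) - p + 2 := by linarith
  have hq3 : (0:ℝ) < φ (x ^ (1 - p) * z) - p + 3 := by linarith
  have hm : HasDerivAt (fun x' : ℝ => x' ^ (1 - p) * z) ((1 - p) * x ^ (1 - p - 1) * z) x :=
    (Real.hasDerivAt_rpow_const (Or.inl hx.ne')).mul_const z
  have hc : HasDerivAt (fun x' : ℝ => φ (x' ^ (1 - p) * z))
      ((1 + φ (x ^ (1 - p) * z)) * (φ (x ^ (1 - p) * z) - p + 2) /
        ((p - 1) * (x ^ (1 - p) * z) * (φ (x ^ (1 - p) * z) - p + 3)) *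
        ((1 - p) * x ^ (1 - p - 1) * z)) x :=
    (hφ' _ hs).comp x hm
  have hden := (hc.sub_const p).add_const 2
  have hinv := (hasDerivAt_const x (1:ℝ)).div hden hq.ne'
  have hG := hc.add hinv
  have hlin : HasDerivAt (fun x' : ℝ => (1 - 1/p) * (x' * z)) ((1 - 1/p) * (1 * z)) x :=
    ((hasDerivAt_id x).mul_const z).const_mul _
  have hmain := hlin.mul hG
  have hB : (fun x' => B2 p φ x' z) =
      fun x' => (1 - 1/p) * (x' * z) *
        (φ (x' ^ (1 - p) * z) + 1 / (φ (x' ^ (1 - p) * z) - p + 2)) := rfl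
  rw [hB]
  refine hmain.congr_deriv ?_
  have hA : x ^ (1 - p - 1) = x ^ (1 - p) / x := by
    rw [show (1 - p - 1) = (1 - p) - 1 by ring, Real.rpow_sub hx, Real.rpow_one]
  rw [hA]
  have hp0 : p ≠ 0 := by linarith
  have hp1 : p - 1 ≠ 0 := by linarith
  have hX : x ^ (1 - p) ≠ 0 := (Real.rpow_pos_of_pos hx _).ne'
  simp only [Pi.add_apply, Pi.div_apply]
  have hq2 : φ (x ^ (1 - p) * z) - p + 2 ≠ 0 := hq.ne'
  have hq3' : φ (x ^ (1 - p) * z) - p + 3 ≠ 0 := hq3.ne'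
  have hq2c : φ (z * x ^ (1 - p)) - p + 2 ≠ 0 := by rw [mul_comm]; exact hq.ne'
  have hq3c : φ (z * x ^ (1 - p)) - p + 3 ≠ 0 := by rw [mul_comm]; exact hq3.ne'
  field_simp
  ring

lemma hBz_aux {p : ℝ} {φ : ℝ → ℝ} (hp : 2 < p) (hφdom : ∀ s, 0 < s → p - 2 < φ s)
    (hφ' : ∀ s, 0 < s →
      HasDerivAt φ ((1 + φ s) * (φ s - p + 2) / ((p - 1) * s * (φ s - p + 3))) s)
    {x z : ℝ} (hx : 0 < x) (hz : 0 < z) :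
    HasDerivAt (fun z' => B2 p φ x z') (x * φ (x ^ (1 - p) * z)) z := by
  have hs : 0 < x ^ (1 - p) * z := mul_pos (Real.rpow_pos_of_pos hx _) hz
  have hu := hφdom _ hs
  have hq : (0:ℝ) < φ (x ^ (1 - p) * z) - p + 2 := by linarith
  have hq3 : (0:ℝ) < φ (x ^ (1 - p) * z) - p + 3 := by linarith
  have hm : HasDerivAt (fun z' : ℝ => x ^ (1 - p) * z') (x ^ (1 - p) * 1) z :=
    (hasDerivAt_id z).const_mul _
  have hc : HasDerivAt (fun z' : ℝ => φ (x ^ (1 - p) * z'))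
      ((1 + φ (x ^ (1 - p) * z)) * (φ (x ^ (1 - p) * z) - p + 2) /
        ((p - 1) * (x ^ (1 - p) * z) * (φ (x ^ (1 - p) * z) - p + 3)) *
        (x ^ (1 - p) * 1)) z :=
    (hφ' _ hs).comp z hm
  have hden := (hc.sub_const p).add_const 2
  have hinv := (hasDerivAt_const z (1:ℝ)).div hden hq.ne'
  have hG := hc.add hinv
  have hlin : HasDerivAt (fun z' : ℝ => (1 - 1/p) * (x * z')) ((1 - 1/p) * (x * 1)) z :=
    ((hasDerivAt_id z).const_mul x).const_mul _
  have hmain := hlin.mul hG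
  have hB : (fun z' => B2 p φ x z') =
      fun z' => (1 - 1/p) * (x * z') *
        (φ (x ^ (1 - p) * z') + 1 / (φ (x ^ (1 - p) * z') - p + 2)) := rfl
  rw [hB]
  refine hmain.congr_deriv ?_
  have hp0 : p ≠ 0 := by linarith
  have hp1 : p - 1 ≠ 0 := by linarith
  have hX : x ^ (1 - p) ≠ 0 := (Real.rpow_pos_of_pos hx _).ne'
  simp only [Pi.add_apply, Pi.div_apply]
  field_simp
  ring

theorem stmt_17 (p : ℝ) (hp : 2 < p) (φ : ℝ → ℝ)
    (hφdom : ∀ s, 0 < s → p - 2 < φ s)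
    (hφ : ∀ s, 0 < s →
      p * (1 - 1 / p) ^ (p - 1) * (1 + φ s) ^ (p - 2) * (φ s - p + 2) = s)
    (hφ' : ∀ s, 0 < s →
      HasDerivAt φ ((1 + φ s) * (φ s - p + 2) / ((p - 1) * s * (φ s - p + 3))) s) :
    ∀ x z : ℝ, 0 < x → 0 < z →
      HasDerivAt (fun z' => deriv (fun x' => B2 p φ x' z') x)
        ((p - 2) / (φ (x ^ (1 - p) * z) - p + 3)) z ∧
      HasDerivAt (fun x' => deriv (fun t => B2 p φ t z) x')
        ((p - 1) ^ 2 * x ^ (-p) * z ^ 2 * deriv φ (x ^ (1 - p) * z)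
          / (φ (x ^ (1 - p) * z) - p + 2) ^ 2) x ∧
      HasDerivAt (fun z' => deriv (fun t => B2 p φ x t) z')
        (x ^ (2 - p) * deriv φ (x ^ (1 - p) * z)) z ∧
      ((p - 1) ^ 2 * x ^ (-p) * z ^ 2 * deriv φ (x ^ (1 - p) * z)
          / (φ (x ^ (1 - p) * z) - p + 2) ^ 2) *
        (x ^ (2 - p) * deriv φ (x ^ (1 - p) * z))
        = ((p - 2) / (φ (x ^ (1 - p) * z) - p + 3) + 1) ^ 2 := by
  intro x z hx hz
  have hs : 0 < x ^ (1 - p) * z := mul_pos (Real.rpow_pos_of_pos hx _) hz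
  have hu := hφdom _ hs
  have hq : (0:ℝ) < φ (x ^ (1 - p) * z) - p + 2 := by linarith
  have hq3 : (0:ℝ) < φ (x ^ (1 - p) * z) - p + 3 := by linarith
  have hp0 : p ≠ 0 := by linarith
  have hp1 : p - 1 ≠ 0 := by linarith
  have hX : x ^ (1 - p) ≠ 0 := (Real.rpow_pos_of_pos hx _).ne'
  have hφd := hφ' _ hs
  have hdφ : deriv φ (x ^ (1 - p) * z) =
      (1 + φ (x ^ (1 - p) * z)) * (φ (x ^ (1 - p) * z) - p + 2) /
        ((p - 1) * (x ^ (1 - p) * z) * (φ (x ^ (1 - p) * z) - p + 3)) := hφd.deriv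
  -- inner derivatives
  have hmz : HasDerivAt (fun z' : ℝ => x ^ (1 - p) * z') (x ^ (1 - p) * 1) z :=
    (hasDerivAt_id z).const_mul _
  have hmx : HasDerivAt (fun x' : ℝ => x' ^ (1 - p) * z) ((1 - p) * x ^ (1 - p - 1) * z) x :=
    (Real.hasDerivAt_rpow_const (Or.inl hx.ne')).mul_const z
  have hcz : HasDerivAt (fun z' : ℝ => φ (x ^ (1 - p) * z'))
      ((1 + φ (x ^ (1 - p) * z)) * (φ (x ^ (1 - p) * z) - p + 2) /
        ((p - 1) * (x ^ (1 - p) * z) * (φ (x ^ (1 - p) * z) - p + 3)) *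
        (x ^ (1 - p) * 1)) z := hφd.comp z hmz
  have hcx : HasDerivAt (fun x' : ℝ => φ (x' ^ (1 - p) * z))
      ((1 + φ (x ^ (1 - p) * z)) * (φ (x ^ (1 - p) * z) - p + 2) /
        ((p - 1) * (x ^ (1 - p) * z) * (φ (x ^ (1 - p) * z) - p + 3)) *
        ((1 - p) * x ^ (1 - p - 1) * z)) x := hφd.comp x hmx
  refine ⟨?_, ?_, ?_, ?_⟩
  · -- B_xz
    have hev : (fun z' => deriv (fun x' => B2 p φ x' z') x) =ᶠ[nhds z]
        fun z' => (p - 1) * z' / (φ (x ^ (1 - p) * z') - p + 2) :=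
      (eventually_gt_nhds hz).mono fun z' hz' => (hBx_aux hp hφdom hφ' hx hz').deriv
    have hnum : HasDerivAt (fun z' : ℝ => (p - 1) * z') ((p - 1) * 1) z :=
      (hasDerivAt_id z).const_mul _
    have hden := (hcz.sub_const p).add_const 2
    have hmain := hnum.div hden hq.ne'
    refine HasDerivAt.congr_of_eventuallyEq ?_ hev
    refine hmain.congr_deriv ?_
    field_simp
    ring
  · -- B_xx
    have hev : (fun x' => deriv (fun t => B2 p φ t z) x') =ᶠ[nhds x]
        fun x' => (p - 1) * z / (φ (x' ^ (1 - p) * z) - p + 2) :=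
      (eventually_gt_nhds hx).mono fun x' hx' => (hBx_aux hp hφdom hφ' hx' hz).deriv
    have hnum : HasDerivAt (fun _ : ℝ => (p - 1) * z) 0 x := hasDerivAt_const _ _
    have hden := (hcx.sub_const p).add_const 2
    have hmain := hnum.div hden hq.ne'
    refine HasDerivAt.congr_of_eventuallyEq ?_ hev
    refine hmain.congr_deriv ?_
    rw [hdφ]
    have hA : x ^ (1 - p - 1) = x ^ (1 - p) / x := by
      rw [show (1 - p - 1) = (1 - p) - 1 by ring, Real.rpow_sub hx, Real.rpow_one]
    have hB : x ^ (-p) = x ^ (1 - p) / x := by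
      rw [show (-p) = (1 - p) - 1 by ring, Real.rpow_sub hx, Real.rpow_one]
    rw [hA, hB]
    field_simp
    ring
  · -- B_zz
    have hev : (fun z' => deriv (fun t => B2 p φ x t) z') =ᶠ[nhds z]
        fun z' => x * φ (x ^ (1 - p) * z') :=
      (eventually_gt_nhds hz).mono fun z' hz' => (hBz_aux hp hφdom hφ' hx hz').deriv
    have hmain := hcz.const_mul x
    refine HasDerivAt.congr_of_eventuallyEq ?_ hev
    refine hmain.congr_deriv ?_
    rw [hdφ]
    have hC : x ^ (2 - p) = x * x ^ (1 - p) := by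
      rw [show (2 - p) = 1 + (1 - p) by ring, Real.rpow_add hx, Real.rpow_one]
    rw [hC]
    field_simp
  · -- determinant identity
    rw [hdφ]
    have hB : x ^ (-p) = x ^ (1 - p) / x := by
      rw [show (-p) = (1 - p) - 1 by ring, Real.rpow_sub hx, Real.rpow_one]
    have hC : x ^ (2 - p) = x * x ^ (1 - p) := by
      rw [show (2 - p) = 1 + (1 - p) by ring, Real.rpow_add hx, Real.rpow_one]
    rw [hB, hC]
    field_simp
    ring
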